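/- (Formal removability under vanishing first horizontal gauge cohomology.) Let R be a commutative ring, D_x, D_y : R → R two commuting derivations extended coefficientwise to R[[λ]] and entrywise to matrices, and let (A₀,B₀) be a zero-curvature representation of n×n matrices over R such that every cocycle with respect to (A₀,B₀) is a coboundary (i.e. the first horizontal gauge cohomology H¹ vanishes). Then for every n×n matrix zero-curvature representation (A(λ), B(λ)) over R[[λ]] whose constant terms are A₀ and B₀, there exists an invertible n×n matrix S(λ) over R[[λ]] with constant term the identity matrix such that the gauge transform of (A(λ), B(λ)) by S(λ) equals the constant series (A₀, B₀). In other words, the formal parameter λ is formally removable. -/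

import Mathlib

/-- A derivation of a commutative ring: an additive map satisfying the Leibniz rule. -/
def IsDeriv {R : Type*} [CommRing R] (D : R → R) : Prop :=
  (∀ a b, D (a + b) = D a + D b) ∧ (∀ a b, D (a * b) = D a * b + a * D b)

/-- The coefficientwise extension of a map `D : R → R` to formal power series `R[[λ]]`. -/
noncomputable def seriesD {R : Type*} [CommRing R] (D : R → R) :
    PowerSeries R → PowerSeries R :=
  fun φ => PowerSeries.mk fun k => D (PowerSeries.coeff (R := R) k φ)

/-- The `k`-th coefficient matrix of a matrix of formal power series. -/
noncomputable def mcoeff {R : Type*} [CommRing R] {n : ℕ} (k : ℕ)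
    (M : Matrix (Fin n) (Fin n) (PowerSeries R)) : Matrix (Fin n) (Fin n) R :=
  M.map (PowerSeries.coeff (R := R) k)

section Aux

variable {R : Type*} [CommRing R] {n : ℕ}

namespace IsDeriv

variable {D : R → R}

/-- `D` as an additive monoid hom. -/
def hom (hD : IsDeriv D) : R →+ R := AddMonoidHom.mk' D hD.1

lemma hom_apply (hD : IsDeriv D) (x : R) : hD.hom x = D x := rfl

lemma zero (hD : IsDeriv D) : D 0 = 0 := map_zero hD.hom

lemma neg (hD : IsDeriv D) (x : R) : D (-x) = - D x := map_neg hD.hom x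

lemma one (hD : IsDeriv D) : D 1 = 0 := by
  have h := hD.2 1 1
  simp only [mul_one, one_mul] at h
  exact (left_eq_add.mp h)

end IsDeriv

section MatD

variable {D : R → R} (M N : Matrix (Fin n) (Fin n) R)

lemma matD_add (hD : IsDeriv D) : (M + N).map D = M.map D + N.map D := by
  ext i j; simp [Matrix.map_apply, hD.1]

lemma matD_neg (hD : IsDeriv D) : (-M).map D = -(M.map D) := by
  ext i j; simp [Matrix.map_apply, hD.neg]

lemma matD_sub (hD : IsDeriv D) : (M - N).map D = M.map D - N.map D := by
  rw [sub_eq_add_neg, matD_add _ _ hD, matD_neg _ hD, sub_eq_add_neg]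

lemma matD_zero (hD : IsDeriv D) : (0 : Matrix (Fin n) (Fin n) R).map D = 0 := by
  ext i j; simp [Matrix.map_apply, hD.zero]

lemma matD_one (hD : IsDeriv D) : (1 : Matrix (Fin n) (Fin n) R).map D = 0 := by
  ext i j
  by_cases h : i = j <;> simp [Matrix.map_apply, Matrix.one_apply, h, hD.one, hD.zero]

lemma matD_mul (hD : IsDeriv D) : (M * N).map D = M.map D * N + M * N.map D := by
  ext i j
  simp only [Matrix.map_apply, Matrix.mul_apply, Matrix.add_apply]
  rw [show D = ⇑hD.hom from rfl, map_sum]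
  simp only [IsDeriv.hom_apply, hD.2]
  rw [Finset.sum_add_distrib]

end MatD

section SeriesD

variable {D : R → R}

lemma seriesD_isDeriv (hD : IsDeriv D) : IsDeriv (seriesD (R := R) D) := by
  constructor
  · intro φ ψ
    ext k
    simp [seriesD, PowerSeries.coeff_mk, map_add, hD.1]
  · intro φ ψ
    ext k
    simp only [seriesD, PowerSeries.coeff_mk, PowerSeries.coeff_mul, map_add]
    rw [show D = ⇑hD.hom from rfl, map_sum]
    simp only [IsDeriv.hom_apply, hD.2]
    rw [Finset.sum_add_distrib]

lemma seriesD_comm {Dx Dy : R → R} (hcomm : ∀ a, Dx (Dy a) = Dy (Dx a)) (φ : PowerSeries R) :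
    seriesD Dx (seriesD Dy φ) = seriesD Dy (seriesD Dx φ) := by
  ext k
  simp [seriesD, PowerSeries.coeff_mk, hcomm]

lemma seriesD_C (hD : IsDeriv D) (a : R) :
    seriesD D (PowerSeries.C (R := R) a) = PowerSeries.C (R := R) (D a) := by
  ext k
  simp only [seriesD, PowerSeries.coeff_mk, PowerSeries.coeff_C]
  split <;> simp [hD.zero]

end SeriesD

section Mcoeff

variable (k : ℕ) (M N : Matrix (Fin n) (Fin n) (PowerSeries R))

lemma mcoeff_add : mcoeff k (M + N) = mcoeff k M + mcoeff k N := by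
  ext i j; simp [mcoeff, Matrix.map_apply]

lemma mcoeff_sub : mcoeff k (M - N) = mcoeff k M - mcoeff k N := by
  ext i j; simp [mcoeff, Matrix.map_apply]

lemma mcoeff_neg : mcoeff k (-M) = -(mcoeff k M) := by
  ext i j; simp [mcoeff, Matrix.map_apply]

lemma mcoeff_zero : mcoeff k (0 : Matrix (Fin n) (Fin n) (PowerSeries R)) = 0 := by
  ext i j; simp [mcoeff, Matrix.map_apply]

lemma mcoeff_mul :
    mcoeff k (M * N) = ∑ x ∈ Finset.HasAntidiagonal.antidiagonal k, mcoeff x.1 M * mcoeff x.2 N := by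
  ext i j
  simp only [mcoeff, Matrix.map_apply, Matrix.mul_apply, map_sum, PowerSeries.coeff_mul,
    Matrix.sum_apply]
  rw [Finset.sum_comm]

lemma mcoeff_map_seriesD (D : R → R) :
    mcoeff k (M.map (seriesD D)) = (mcoeff k M).map D := by
  ext i j
  simp [mcoeff, seriesD, Matrix.map_apply, PowerSeries.coeff_mk]

lemma mcoeff_mapC (M₀ : Matrix (Fin n) (Fin n) R) :
    mcoeff k (M₀.map (PowerSeries.C (R := R))) = if k = 0 then M₀ else 0 := by
  ext i j
  by_cases h : k = 0 <;> simp [mcoeff, Matrix.map_apply, PowerSeries.coeff_C, h]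

lemma mcoeff_Cmap_mul (M₀ : Matrix (Fin n) (Fin n) R) :
    mcoeff k (M₀.map (PowerSeries.C (R := R)) * M) = M₀ * mcoeff k M := by
  ext i j
  simp [mcoeff, Matrix.map_apply, Matrix.mul_apply, PowerSeries.coeff_C_mul]

lemma mcoeff_mul_Cmap (M₀ : Matrix (Fin n) (Fin n) R) :
    mcoeff k (M * M₀.map (PowerSeries.C (R := R))) = mcoeff k M * M₀ := by
  ext i j
  simp [mcoeff, Matrix.map_apply, Matrix.mul_apply, PowerSeries.coeff_mul_C]

lemma mext {M N : Matrix (Fin n) (Fin n) (PowerSeries R)}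
    (h : ∀ k, mcoeff k M = mcoeff k N) : M = N := by
  ext i j k
  exact congrFun (congrFun (h k) i) j

end Mcoeff

section Key

variable {R' : Type*} [CommRing R'] {n : ℕ}

lemma key_identity {d1 d2 : R' → R'} (h1 : IsDeriv d1) (h2 : IsDeriv d2)
    (hcomm : ∀ x, d1 (d2 x) = d2 (d1 x))
    (α β A B P : Matrix (Fin n) (Fin n) R')
    (hz : A.map d2 - B.map d1 + (A * B - B * A) = 0)
    (hz0 : α.map d2 - β.map d1 + (α * β - β * α) = 0) :
    (P.map d1 - α * P + P * A).map d2
      - (β * (P.map d1 - α * P + P * A) - (P.map d1 - α * P + P * A) * β)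
      - ((P.map d2 - β * P + P * B).map d1
        - (α * (P.map d2 - β * P + P * B) - (P.map d2 - β * P + P * B) * α))
    = (P.map d2 - β * P + P * B) * (A - α) - (P.map d1 - α * P + P * A) * (B - β) := by
  have hA : A.map d2 = -(A * B - B * A) + B.map d1 := by
    have h' := eq_neg_of_add_eq_zero_left hz
    rw [sub_eq_iff_eq_add] at h'
    exact h'
  have hα : α.map d2 = -(α * β - β * α) + β.map d1 := by
    have h' := eq_neg_of_add_eq_zero_left hz0
    rw [sub_eq_iff_eq_add] at h'
    exact h'
  have hPcomm : (P.map d1).map d2 = (P.map d2).map d1 := by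
    ext i j; exact (hcomm (P i j)).symm
  simp only [matD_add _ _ h2, matD_sub _ _ h2, matD_mul _ _ h2,
    matD_add _ _ h1, matD_sub _ _ h1, matD_mul _ _ h1]
  rw [hA, hα, hPcomm]
  noncomm_ring

end Key

section Rec

variable {R : Type*} [CommRing R] {n : ℕ}
variable (Dx Dy : R → R) (A₀ B₀ : Matrix (Fin n) (Fin n) R)
variable (hH1 : ∀ U V : Matrix (Fin n) (Fin n) R,
      U.map Dy - (B₀ * U - U * B₀) = V.map Dx - (A₀ * V - V * A₀) →
      ∃ S : Matrix (Fin n) (Fin n) R,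
        U = S.map Dx - (A₀ * S - S * A₀) ∧ V = S.map Dy - (B₀ * S - S * B₀))
variable (a b : ℕ → Matrix (Fin n) (Fin n) R)

open Classical in
noncomputable def pick (U V : Matrix (Fin n) (Fin n) R) : Matrix (Fin n) (Fin n) R :=
  if h : U.map Dy - (B₀ * U - U * B₀) = V.map Dx - (A₀ * V - V * A₀) then
    Classical.choose (hH1 U V h)
  else 0

lemma pick_spec {U V : Matrix (Fin n) (Fin n) R}
    (h : U.map Dy - (B₀ * U - U * B₀) = V.map Dx - (A₀ * V - V * A₀)) :
    U = (pick Dx Dy A₀ B₀ hH1 U V).map Dx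
        - (A₀ * pick Dx Dy A₀ B₀ hH1 U V - pick Dx Dy A₀ B₀ hH1 U V * A₀) ∧
    V = (pick Dx Dy A₀ B₀ hH1 U V).map Dy
        - (B₀ * pick Dx Dy A₀ B₀ hH1 U V - pick Dx Dy A₀ B₀ hH1 U V * B₀) := by
  unfold pick
  rw [dif_pos h]
  exact Classical.choose_spec (hH1 U V h)

/-- approximations: `fseq m j` is the `j`-th coefficient after `m` steps. -/
noncomputable def fseq : ℕ → ℕ → Matrix (Fin n) (Fin n) R
  | 0 => fun _ => 1
  | (m+1) => fun j =>
      if j = m + 1 then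
        pick Dx Dy A₀ B₀ hH1
          (-∑ x ∈ Finset.HasAntidiagonal.antidiagonal m, fseq m x.1 * a (x.2 + 1))
          (-∑ x ∈ Finset.HasAntidiagonal.antidiagonal m, fseq m x.1 * b (x.2 + 1))
      else fseq m j

/-- the sequence of coefficients of the gauge matrix. -/
noncomputable def sseq (k : ℕ) : Matrix (Fin n) (Fin n) R :=
  fseq Dx Dy A₀ B₀ hH1 a b k k

lemma fseq_stable : ∀ m j, j ≤ m → fseq Dx Dy A₀ B₀ hH1 a b m j = sseq Dx Dy A₀ B₀ hH1 a b j := by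
  intro m
  induction m with
  | zero => intro j hj; interval_cases j; rfl
  | succ m ih =>
    intro j hj
    rcases eq_or_lt_of_le hj with h | h
    · rw [h]; rfl
    · have hjm : j ≤ m := Nat.lt_succ_iff.mp h
      have : fseq Dx Dy A₀ B₀ hH1 a b (m+1) j = fseq Dx Dy A₀ B₀ hH1 a b m j := by
        simp only [fseq]
        rw [if_neg (by omega)]
      rw [this, ih j hjm]

lemma sseq_zero : sseq Dx Dy A₀ B₀ hH1 a b 0 = 1 := rfl

lemma sseq_succ (m : ℕ) :
    sseq Dx Dy A₀ B₀ hH1 a b (m+1) = pick Dx Dy A₀ B₀ hH1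
      (-∑ x ∈ Finset.HasAntidiagonal.antidiagonal m, sseq Dx Dy A₀ B₀ hH1 a b x.1 * a (x.2 + 1))
      (-∑ x ∈ Finset.HasAntidiagonal.antidiagonal m, sseq Dx Dy A₀ B₀ hH1 a b x.1 * b (x.2 + 1)) := by
  have hU : (∑ x ∈ Finset.HasAntidiagonal.antidiagonal m, fseq Dx Dy A₀ B₀ hH1 a b m x.1 * a (x.2 + 1))
      = ∑ x ∈ Finset.HasAntidiagonal.antidiagonal m, sseq Dx Dy A₀ B₀ hH1 a b x.1 * a (x.2 + 1) := by
    refine Finset.sum_congr rfl fun x hx => ?_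
    rw [fseq_stable Dx Dy A₀ B₀ hH1 a b m x.1
      (by have := Finset.HasAntidiagonal.mem_antidiagonal.mp hx; omega)]
  have hV : (∑ x ∈ Finset.HasAntidiagonal.antidiagonal m, fseq Dx Dy A₀ B₀ hH1 a b m x.1 * b (x.2 + 1))
      = ∑ x ∈ Finset.HasAntidiagonal.antidiagonal m, sseq Dx Dy A₀ B₀ hH1 a b x.1 * b (x.2 + 1) := by
    refine Finset.sum_congr rfl fun x hx => ?_
    rw [fseq_stable Dx Dy A₀ B₀ hH1 a b m x.1
      (by have := Finset.HasAntidiagonal.mem_antidiagonal.mp hx; omega)]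
  show fseq Dx Dy A₀ B₀ hH1 a b (m+1) (m+1) = _
  simp only [fseq]
  rw [if_pos trivial, hU, hV]

end Rec

section Step

variable {R : Type*} [CommRing R] {n : ℕ}

lemma step_cocycle {Dx Dy : R → R} (hDx : IsDeriv Dx) (hDy : IsDeriv Dy)
    (hcomm : ∀ x, Dx (Dy x) = Dy (Dx x))
    (A₀ B₀ : Matrix (Fin n) (Fin n) R)
    (A B : Matrix (Fin n) (Fin n) (PowerSeries R))
    (hz : A.map (seriesD Dy) - B.map (seriesD Dx) + (A * B - B * A) = 0)
    (hz0 : (A₀.map (PowerSeries.C (R := R))).map (seriesD Dy)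
        - (B₀.map (PowerSeries.C (R := R))).map (seriesD Dx)
        + (A₀.map (PowerSeries.C (R := R)) * B₀.map (PowerSeries.C (R := R))
          - B₀.map (PowerSeries.C (R := R)) * A₀.map (PowerSeries.C (R := R))) = 0)
    (hA0 : mcoeff 0 A = A₀) (hB0 : mcoeff 0 B = B₀)
    (s : ℕ → Matrix (Fin n) (Fin n) R) (m : ℕ)
    (ih : ∀ j, j < m + 1 →
      ((s j).map Dx = A₀ * s j - ∑ x ∈ Finset.HasAntidiagonal.antidiagonal j, s x.1 * mcoeff x.2 A) ∧
      ((s j).map Dy = B₀ * s j - ∑ x ∈ Finset.HasAntidiagonal.antidiagonal j, s x.1 * mcoeff x.2 B)) :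
    (∑ x ∈ Finset.HasAntidiagonal.antidiagonal m, s x.1 * mcoeff (x.2 + 1) A).map Dy
      - (B₀ * (∑ x ∈ Finset.HasAntidiagonal.antidiagonal m, s x.1 * mcoeff (x.2 + 1) A)
        - (∑ x ∈ Finset.HasAntidiagonal.antidiagonal m, s x.1 * mcoeff (x.2 + 1) A) * B₀)
    = (∑ x ∈ Finset.HasAntidiagonal.antidiagonal m, s x.1 * mcoeff (x.2 + 1) B).map Dx
      - (A₀ * (∑ x ∈ Finset.HasAntidiagonal.antidiagonal m, s x.1 * mcoeff (x.2 + 1) B)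
        - (∑ x ∈ Finset.HasAntidiagonal.antidiagonal m, s x.1 * mcoeff (x.2 + 1) B) * A₀) := by
  have hsdx := seriesD_isDeriv hDx
  have hsdy := seriesD_isDeriv hDy
  have hscomm : ∀ φ, seriesD Dx (seriesD Dy φ) = seriesD Dy (seriesD Dx φ) :=
    seriesD_comm hcomm
  set α := A₀.map (PowerSeries.C (R := R)) with hαdef
  set β := B₀.map (PowerSeries.C (R := R)) with hβdef
  set P := (Matrix.of fun i j =>
      PowerSeries.mk fun t => if t < m + 1 then s t i j else 0 :
      Matrix (Fin n) (Fin n) (PowerSeries R)) with hPdef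
  have hP : ∀ t, mcoeff t P = if t < m + 1 then s t else 0 := by
    intro t; ext i j
    by_cases h : t ≤ m <;>
      simp [hPdef, mcoeff, Matrix.map_apply, Matrix.of_apply, PowerSeries.coeff_mk, h]
  have hkey := key_identity hsdx hsdy hscomm α β A B P hz hz0
  set Ex := P.map (seriesD Dx) - α * P + P * A with hExdef
  set Ey := P.map (seriesD Dy) - β * P + P * B with hEydef
  -- lower coefficients of Ex, Ey vanish
  have hmc : ∀ j, j < m + 1 → mcoeff j Ex = 0 ∧ mcoeff j Ey = 0 := by
    intro j hj
    have h1 : mcoeff j (P * A) = ∑ x ∈ Finset.HasAntidiagonal.antidiagonal j, s x.1 * mcoeff x.2 A := by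
      rw [mcoeff_mul]
      refine Finset.sum_congr rfl fun x hx => ?_
      rw [hP x.1, if_pos (by have := Finset.HasAntidiagonal.mem_antidiagonal.mp hx; omega)]
    have h2 : mcoeff j (P * B) = ∑ x ∈ Finset.HasAntidiagonal.antidiagonal j, s x.1 * mcoeff x.2 B := by
      rw [mcoeff_mul]
      refine Finset.sum_congr rfl fun x hx => ?_
      rw [hP x.1, if_pos (by have := Finset.HasAntidiagonal.mem_antidiagonal.mp hx; omega)]
    constructor
    · rw [hExdef, mcoeff_add, mcoeff_sub, mcoeff_map_seriesD, mcoeff_Cmap_mul, h1,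
        hP j, if_pos hj, (ih j hj).1]
      abel
    · rw [hEydef, mcoeff_add, mcoeff_sub, mcoeff_map_seriesD, mcoeff_Cmap_mul, h2,
        hP j, if_pos hj, (ih j hj).2]
      abel
  -- coefficient m+1 of Ex and Ey
  have hU : mcoeff (m+1) Ex = ∑ x ∈ Finset.HasAntidiagonal.antidiagonal m, s x.1 * mcoeff (x.2 + 1) A := by
    rw [hExdef, mcoeff_add, mcoeff_sub, mcoeff_map_seriesD, mcoeff_Cmap_mul, mcoeff_mul,
      hP (m+1), if_neg (lt_irrefl _), matD_zero hDx, mul_zero]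
    simp only [Finset.Nat.sum_antidiagonal_succ']
    rw [hP (m+1), if_neg (lt_irrefl _), zero_mul]
    have hc : ∀ x ∈ Finset.HasAntidiagonal.antidiagonal m,
        mcoeff x.1 P * mcoeff (x.2 + 1) A = s x.1 * mcoeff (x.2 + 1) A := fun x hx => by
      rw [hP x.1, if_pos (by have := Finset.HasAntidiagonal.mem_antidiagonal.mp hx; omega)]
    rw [Finset.sum_congr rfl hc]
    abel
  have hV : mcoeff (m+1) Ey = ∑ x ∈ Finset.HasAntidiagonal.antidiagonal m, s x.1 * mcoeff (x.2 + 1) B := by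
    rw [hEydef, mcoeff_add, mcoeff_sub, mcoeff_map_seriesD, mcoeff_Cmap_mul, mcoeff_mul,
      hP (m+1), if_neg (lt_irrefl _), matD_zero hDy, mul_zero]
    simp only [Finset.Nat.sum_antidiagonal_succ']
    rw [hP (m+1), if_neg (lt_irrefl _), zero_mul]
    have hc : ∀ x ∈ Finset.HasAntidiagonal.antidiagonal m,
        mcoeff x.1 P * mcoeff (x.2 + 1) B = s x.1 * mcoeff (x.2 + 1) B := fun x hx => by
      rw [hP x.1, if_pos (by have := Finset.HasAntidiagonal.mem_antidiagonal.mp hx; omega)]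
    rw [Finset.sum_congr rfl hc]
    abel
  -- the right-hand side of the key identity has vanishing coefficient m+1
  have hzero : mcoeff (m+1) (Ey * (A - α) - Ex * (B - β)) = 0 := by
    rw [mcoeff_sub, mcoeff_mul, mcoeff_mul]
    have e1 : ∀ x ∈ Finset.HasAntidiagonal.antidiagonal (m+1), mcoeff x.1 Ey * mcoeff x.2 (A - α) = 0 := by
      intro x hx
      have hx' := Finset.HasAntidiagonal.mem_antidiagonal.mp hx
      rcases Nat.eq_zero_or_pos x.2 with h2 | h2
      · have : mcoeff x.2 (A - α) = 0 := by
          rw [h2, mcoeff_sub, hA0, hαdef, mcoeff_mapC, if_pos rfl, sub_self]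
        rw [this, mul_zero]
      · have hx1 : x.1 < m + 1 := by omega
        rw [(hmc x.1 hx1).2, zero_mul]
    have e2 : ∀ x ∈ Finset.HasAntidiagonal.antidiagonal (m+1), mcoeff x.1 Ex * mcoeff x.2 (B - β) = 0 := by
      intro x hx
      have hx' := Finset.HasAntidiagonal.mem_antidiagonal.mp hx
      rcases Nat.eq_zero_or_pos x.2 with h2 | h2
      · have : mcoeff x.2 (B - β) = 0 := by
          rw [h2, mcoeff_sub, hB0, hβdef, mcoeff_mapC, if_pos rfl, sub_self]
        rw [this, mul_zero]
      · have hx1 : x.1 < m + 1 := by omega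
        rw [(hmc x.1 hx1).1, zero_mul]
    rw [Finset.sum_eq_zero e1, Finset.sum_eq_zero e2, sub_zero]
  have hfinal := congrArg (mcoeff (m+1)) hkey
  rw [hzero, hαdef, hβdef] at hfinal
  simp only [mcoeff_sub, mcoeff_map_seriesD, mcoeff_Cmap_mul, mcoeff_mul_Cmap, hU, hV] at hfinal
  exact sub_eq_zero.mp hfinal

end Step

end Aux

section AC

variable {R : Type*} [CommRing R] {n : ℕ}

/-- the sequence of coefficient matrices. -/
noncomputable def acoeff (A : Matrix (Fin n) (Fin n) (PowerSeries R)) :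
    ℕ → Matrix (Fin n) (Fin n) R := fun t => mcoeff t A

lemma acoeff_apply (A : Matrix (Fin n) (Fin n) (PowerSeries R)) (t : ℕ) :
    acoeff A t = mcoeff t A := rfl

end AC

/-- Formal removability under vanishing first horizontal gauge cohomology:
if every cocycle with respect to the zero-curvature representation `(A₀, B₀)` is a
coboundary, then every formal one-parameter zero-curvature representation over `R[[λ]]`
with constant terms `A₀, B₀` can be gauged to the constant family `(A₀, B₀)` by an
invertible matrix over `R[[λ]]` whose constant term is the identity. -/
theorem formally_removable_of_H1_zero {R : Type*} [CommRing R] {n : ℕ}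
    (Dx Dy : R → R) (hDx : IsDeriv Dx) (hDy : IsDeriv Dy)
    (hcomm : ∀ a, Dx (Dy a) = Dy (Dx a))
    (A₀ B₀ : Matrix (Fin n) (Fin n) R)
    (hzcr : A₀.map Dy - B₀.map Dx + (A₀ * B₀ - B₀ * A₀) = 0)
    (hH1 : ∀ U V : Matrix (Fin n) (Fin n) R,
      U.map Dy - (B₀ * U - U * B₀) = V.map Dx - (A₀ * V - V * A₀) →
      ∃ S : Matrix (Fin n) (Fin n) R,
        U = S.map Dx - (A₀ * S - S * A₀) ∧ V = S.map Dy - (B₀ * S - S * B₀)) :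
    ∀ A B : Matrix (Fin n) (Fin n) (PowerSeries R),
      A.map (seriesD Dy) - B.map (seriesD Dx) + (A * B - B * A) = 0 →
      mcoeff 0 A = A₀ → mcoeff 0 B = B₀ →
      ∃ S T : Matrix (Fin n) (Fin n) (PowerSeries R),
        mcoeff 0 S = 1 ∧ S * T = 1 ∧ T * S = 1 ∧
        S.map (seriesD Dx) * T + S * A * T = A₀.map (PowerSeries.C (R := R)) ∧
        S.map (seriesD Dy) * T + S * B * T = B₀.map (PowerSeries.C (R := R)) := by
  intro A B hz hA0 hB0
  -- the base zero-curvature representation, promoted to power series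
  have hz0 : (A₀.map (PowerSeries.C (R := R))).map (seriesD Dy)
      - (B₀.map (PowerSeries.C (R := R))).map (seriesD Dx)
      + (A₀.map (PowerSeries.C (R := R)) * B₀.map (PowerSeries.C (R := R))
        - B₀.map (PowerSeries.C (R := R)) * A₀.map (PowerSeries.C (R := R))) = 0 := by
    have hmapy : (A₀.map (PowerSeries.C (R := R))).map (seriesD Dy)
        = (A₀.map Dy).map (PowerSeries.C (R := R)) := by
      ext i j; simp [Matrix.map_apply, seriesD_C hDy]
    have hmapx : (B₀.map (PowerSeries.C (R := R))).map (seriesD Dx)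
        = (B₀.map Dx).map (PowerSeries.C (R := R)) := by
      ext i j; simp [Matrix.map_apply, seriesD_C hDx]
    have h0 := congrArg (RingHom.mapMatrix (m := Fin n) (PowerSeries.C (R := R))) hzcr
    simp only [map_add, map_sub, map_mul, map_zero, RingHom.mapMatrix_apply] at h0
    rw [hmapy, hmapx]
    exact h0
  set s : ℕ → Matrix (Fin n) (Fin n) R :=
    sseq Dx Dy A₀ B₀ hH1 (acoeff A) (acoeff B) with hsdef
  have hs0 : s 0 = 1 := rfl
  have hssucc : ∀ m : ℕ, s (m + 1) = pick Dx Dy A₀ B₀ hH1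
      (-(∑ x ∈ Finset.HasAntidiagonal.antidiagonal m, s x.1 * acoeff A (x.2 + 1)))
      (-(∑ x ∈ Finset.HasAntidiagonal.antidiagonal m, s x.1 * acoeff B (x.2 + 1))) := by
    intro m
    rw [hsdef]
    exact sseq_succ Dx Dy A₀ B₀ hH1 (acoeff A) (acoeff B) m
  have main : ∀ k : ℕ,
      ((s k).map Dx = A₀ * s k - ∑ x ∈ Finset.HasAntidiagonal.antidiagonal k, s x.1 * mcoeff x.2 A) ∧
      ((s k).map Dy = B₀ * s k - ∑ x ∈ Finset.HasAntidiagonal.antidiagonal k, s x.1 * mcoeff x.2 B) := by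
    intro k
    induction k using Nat.strong_induction_on with
    | _ k ih =>
      rcases k with _ | m
      · constructor
        · rw [show s 0 = (1 : Matrix (Fin n) (Fin n) R) from hs0, matD_one hDx,
            Finset.Nat.antidiagonal_zero, Finset.sum_singleton]
          simp [hA0, hs0]
        · rw [show s 0 = (1 : Matrix (Fin n) (Fin n) R) from hs0, matD_one hDy,
            Finset.Nat.antidiagonal_zero, Finset.sum_singleton]
          simp [hB0, hs0]
      · have ihm : ∀ j, j < m + 1 →
            ((s j).map Dx = A₀ * s j - ∑ x ∈ Finset.HasAntidiagonal.antidiagonal j, s x.1 * mcoeff x.2 A) ∧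
            ((s j).map Dy = B₀ * s j - ∑ x ∈ Finset.HasAntidiagonal.antidiagonal j, s x.1 * mcoeff x.2 B) :=
          fun j hj => ih j hj
        have hcoc := step_cocycle hDx hDy hcomm A₀ B₀ A B hz hz0 hA0 hB0 s m ihm
        have hnegy : ∀ W : Matrix (Fin n) (Fin n) R,
            (-W).map Dy - (B₀ * -W - -W * B₀) = -(W.map Dy - (B₀ * W - W * B₀)) := by
          intro W; rw [matD_neg _ hDy]; noncomm_ring
        have hnegx : ∀ W : Matrix (Fin n) (Fin n) R,
            (-W).map Dx - (A₀ * -W - -W * A₀) = -(W.map Dx - (A₀ * W - W * A₀)) := by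
          intro W; rw [matD_neg _ hDx]; noncomm_ring
        have hcoc' : (-(∑ x ∈ Finset.HasAntidiagonal.antidiagonal m, s x.1 * acoeff A (x.2 + 1))).map Dy
            - (B₀ * -(∑ x ∈ Finset.HasAntidiagonal.antidiagonal m, s x.1 * acoeff A (x.2 + 1))
              - -(∑ x ∈ Finset.HasAntidiagonal.antidiagonal m, s x.1 * acoeff A (x.2 + 1)) * B₀)
            = (-(∑ x ∈ Finset.HasAntidiagonal.antidiagonal m, s x.1 * acoeff B (x.2 + 1))).map Dx
            - (A₀ * -(∑ x ∈ Finset.HasAntidiagonal.antidiagonal m, s x.1 * acoeff B (x.2 + 1))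
              - -(∑ x ∈ Finset.HasAntidiagonal.antidiagonal m, s x.1 * acoeff B (x.2 + 1)) * A₀) := by
          rw [hnegy, hnegx]
          exact congrArg Neg.neg hcoc
        obtain ⟨e1, e2⟩ := pick_spec Dx Dy A₀ B₀ hH1 hcoc'
        rw [← hssucc m] at e1 e2
        simp only [acoeff_apply] at e1 e2
        constructor
        · have e1' : (s (m+1)).map Dx
              = -(∑ x ∈ Finset.HasAntidiagonal.antidiagonal m, s x.1 * mcoeff (x.2 + 1) A)
                + (A₀ * s (m+1) - s (m+1) * A₀) := by
            have h' := e1.symm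
            rw [sub_eq_iff_eq_add] at h'
            exact h'
          simp only [Finset.Nat.sum_antidiagonal_succ']
          rw [hA0, e1']
          abel
        · have e2' : (s (m+1)).map Dy
              = -(∑ x ∈ Finset.HasAntidiagonal.antidiagonal m, s x.1 * mcoeff (x.2 + 1) B)
                + (B₀ * s (m+1) - s (m+1) * B₀) := by
            have h' := e2.symm
            rw [sub_eq_iff_eq_add] at h'
            exact h'
          simp only [Finset.Nat.sum_antidiagonal_succ']
          rw [hB0, e2']
          abel
  -- assemble the gauge matrix
  set S : Matrix (Fin n) (Fin n) (PowerSeries R) :=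
    Matrix.of (fun i j => PowerSeries.mk fun t => s t i j) with hSdef
  have hmS : ∀ t, mcoeff t S = s t := by
    intro t; ext i j
    simp [hSdef, mcoeff, Matrix.map_apply, Matrix.of_apply, PowerSeries.coeff_mk]
  have hSx : S.map (seriesD Dx) = A₀.map (PowerSeries.C (R := R)) * S - S * A := by
    apply mext; intro t
    rw [mcoeff_sub, mcoeff_map_seriesD, mcoeff_Cmap_mul, mcoeff_mul, hmS t]
    have hc : ∀ x ∈ Finset.HasAntidiagonal.antidiagonal t,
        mcoeff x.1 S * mcoeff x.2 A = s x.1 * mcoeff x.2 A := fun x _ => by rw [hmS x.1]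
    rw [Finset.sum_congr rfl hc, (main t).1]
  have hSy : S.map (seriesD Dy) = B₀.map (PowerSeries.C (R := R)) * S - S * B := by
    apply mext; intro t
    rw [mcoeff_sub, mcoeff_map_seriesD, mcoeff_Cmap_mul, mcoeff_mul, hmS t]
    have hc : ∀ x ∈ Finset.HasAntidiagonal.antidiagonal t,
        mcoeff x.1 S * mcoeff x.2 B = s x.1 * mcoeff x.2 B := fun x _ => by rw [hmS x.1]
    rw [Finset.sum_congr rfl hc, (main t).2]
  have hconst : S.map (PowerSeries.constantCoeff (R := R)) = 1 := by
    ext i j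
    have h0 := congrFun (congrFun (hmS 0) i) j
    have h1 : (PowerSeries.coeff (R := R) 0) (S i j) = (s 0) i j := h0
    rw [hs0] at h1
    simpa [Matrix.map_apply, ← PowerSeries.coeff_zero_eq_constantCoeff] using h1
  have hdet : IsUnit S.det := by
    rw [PowerSeries.isUnit_iff_constantCoeff]
    have hd : (PowerSeries.constantCoeff (R := R)) S.det
        = (S.map (PowerSeries.constantCoeff (R := R))).det := RingHom.map_det _ _
    rw [hd, hconst, Matrix.det_one]
    exact isUnit_one
  obtain ⟨u, hu⟩ := (Matrix.isUnit_iff_isUnit_det S).mpr hdet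
  have hST : S * (↑u⁻¹ : Matrix (Fin n) (Fin n) (PowerSeries R)) = 1 := by
    rw [← hu]; exact u.mul_inv
  have hTS : (↑u⁻¹ : Matrix (Fin n) (Fin n) (PowerSeries R)) * S = 1 := by
    rw [← hu]; exact u.inv_mul
  refine ⟨S, (↑u⁻¹ : Matrix (Fin n) (Fin n) (PowerSeries R)), ?_, hST, hTS, ?_, ?_⟩
  · rw [hmS 0, hs0]
  · rw [hSx, sub_mul, mul_assoc, hST, mul_one]
    exact sub_add_cancel _ _
  · rw [hSy, sub_mul, mul_assoc, hST, mul_one]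
    exact sub_add_cancel _ _
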